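/- Let d ≥ 3 and l ≥ 1. Suppose f_1,…,f_l : ℂ^l → ℂ and F : ℂ^l → ℂ is real-differentiable satisfying (H3) and (H5). Then for every z ∈ ℂ^l the Euler-type identity holds: Re Σ_{k=1}^l f_k(z) · conj(z_k) = (2d/(d−2)) · Re F(z). -/

import Mathlib

open Complex Finset

/-- The Wirtinger derivative `∂/∂z_m` of a real-differentiable function `f : ℂ^l → ℂ`. -/
noncomputable def wD {l : ℕ} (f : (Fin l → ℂ) → ℂ) (z : Fin l → ℂ) (m : Fin l) : ℂ :=
  (1 / 2 : ℂ) *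
    ((fderiv ℝ f z) (Pi.single m 1) - Complex.I * (fderiv ℝ f z) (Pi.single m Complex.I))

/-- The Wirtinger derivative `∂/∂z̄_m` of a real-differentiable function `f : ℂ^l → ℂ`. -/
noncomputable def wDbar {l : ℕ} (f : (Fin l → ℂ) → ℂ) (z : Fin l → ℂ) (m : Fin l) : ℂ :=
  (1 / 2 : ℂ) *
    ((fderiv ℝ f z) (Pi.single m 1) + Complex.I * (fderiv ℝ f z) (Pi.single m Complex.I))

lemma fderiv_expand {l : ℕ} (F : (Fin l → ℂ) → ℂ) (z w : Fin l → ℂ) :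
    (fderiv ℝ F z) w = ∑ k, (wD F z k * w k + wDbar F z k * (starRingEnd ℂ) (w k)) := by
  set L := fderiv ℝ F z with hL
  have hw : w = ∑ k, Pi.single k (w k) := by
    simp [Finset.univ_sum_single]
  conv_lhs => rw [hw]
  rw [map_sum]
  refine Finset.sum_congr rfl fun k _ => ?_
  have hsingle : (Pi.single k (w k) : Fin l → ℂ) =
      (w k).re • (Pi.single k (1 : ℂ) : Fin l → ℂ) + (w k).im • (Pi.single k Complex.I : Fin l → ℂ) := by
    rw [← Pi.single_smul, ← Pi.single_smul, ← Pi.single_add]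
    congr 1
    simp [Complex.real_smul]
  rw [hsingle, map_add, map_smul, map_smul]
  simp only [wD, wDbar]
  set A := L (Pi.single k (1 : ℂ))
  set B := L (Pi.single k Complex.I)
  have : (starRingEnd ℂ) (w k) = (w k).re - (w k).im * Complex.I := by
    simp [Complex.ext_iff]
  rw [this]
  have hwk : (w k) = (w k).re + (w k).im * Complex.I := (Complex.re_add_im (w k)).symm
  rw [hwk]
  simp only [Complex.real_smul]
  push_cast
  ring_nf
  simp [Complex.ext_iff]
  ring_nf
  constructor <;> trivial

theorem statement6 (d l : ℕ) (hd : 3 ≤ d) (hl : 1 ≤ l)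
    (f : Fin l → (Fin l → ℂ) → ℂ)
    (F : (Fin l → ℂ) → ℂ) (hF : Differentiable ℝ F)
    (hH3 : ∀ (z : Fin l → ℂ) (k : Fin l),
      f k z = wDbar F z k + starRingEnd ℂ (wD F z k))
    (hH5 : ∀ lam : ℝ, 0 < lam → ∀ z : Fin l → ℂ,
      F (fun j => (lam : ℂ) * z j) =
        ((lam ^ ((2 * (d : ℝ)) / ((d : ℝ) - 2)) : ℝ) : ℂ) * F z) :
    ∀ z : Fin l → ℂ,
      (∑ k, f k z * starRingEnd ℂ (z k)).re =
        (2 * (d : ℝ) / ((d : ℝ) - 2)) * (F z).re := by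
  intro z
  set p : ℝ := 2 * (d : ℝ) / ((d : ℝ) - 2) with hp
  -- Euler identity via scaling
  have hφ : HasDerivAt (fun t : ℝ => t • z) z 1 := by
    simpa using (hasDerivAt_id (1 : ℝ)).smul_const z
  have hG1 : HasDerivAt (fun t : ℝ => F (t • z)) ((fderiv ℝ F z) z) 1 := by
    have := ((hF ((1 : ℝ) • z)).hasFDerivAt).comp_hasDerivAt 1 hφ
    simp only [one_smul] at this; exact this
  have hG2 : HasDerivAt (fun t : ℝ => F (t • z)) (p • F z) 1 := by
    have h1 : HasDerivAt (fun t : ℝ => (t ^ p : ℝ) • F z) (p • F z) 1 := by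
      have := (Real.hasDerivAt_rpow_const (p := p) (x := 1)
        (Or.inl one_ne_zero)).smul_const (F z)
      simpa using this
    apply h1.congr_of_eventuallyEq
    filter_upwards [eventually_gt_nhds (by norm_num : (0:ℝ) < 1)] with t ht
    have h5 := hH5 t ht z
    have : (t • z) = fun j => (t : ℂ) * z j := by
      funext j; simp [Complex.real_smul]
    rw [this, h5, Complex.real_smul, hp]
  have hEuler : (fderiv ℝ F z) z = p • F z := hG1.unique hG2
  have hexp := fderiv_expand F z z
  have hre : (∑ k, f k z * starRingEnd ℂ (z k)).re = ((fderiv ℝ F z) z).re := by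
    rw [hexp, Complex.re_sum, Complex.re_sum]
    refine Finset.sum_congr rfl fun k _ => ?_
    rw [hH3]
    rw [add_mul, ← map_mul]
    simp [Complex.add_re, Complex.conj_re, add_comm]
  rw [hre, hEuler]
  simp [Complex.real_smul]
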